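/- Let (q₁,p₁,q₂,p₂) be a holomorphic solution of system (1) on a domain D with data (η; α₀,α₁,α₂,α₃,α₄,α₅), and suppose p₂ is nowhere zero on D. Then the quadruple (q₁, p₁, q₂ + α₅/p₂, p₂), regarded as holomorphic functions of the same variables (t,s), is a holomorphic solution of system (1) on D with the same η and with parameters (α₀+α₅, α₁+α₅, α₂, α₃+α₅, α₄+α₅, −α₅). (Bäcklund transformation s₂.) -/

import Mathlib

noncomputable section

/-- The Painlevé VI Hamiltonian `H_VI(q,p,t;β₁,β₂,β₃,β₄)` (with fixed `η`). -/
def Hvi (eta b1 b2 b3 b4 q p t : ℂ) : ℂ :=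
  (q*(q-1)*(q-eta)*(q-t)*p^2
    + (b1*(t-eta)*q*(q-1) + 2*b2*q*(q-1)*(q-eta) + b3*(t-1)*q*(q-eta)
        + b4*t*(q-1)*(q-eta))*p
    + b2*((b1+b2)*(t-eta) + b2*(q-1) + b3*(t-1) + t*b4)*q)
  / (t*(t-1)*(t-eta))

/-- The first Hamiltonian `H₁` of system (1). -/
def H1 (eta a1 a2 a3 a4 a5 q1 p1 q2 p2 t s : ℂ) : ℂ :=
  Hvi eta a1 a2 a3 a4 q1 p1 t
  + a2*p2*((-(t-1)*s*q1 + t*(s-1)*q2 + (t-s)*q1*q2)/(t*(t-1)*(t-s))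
      + (q1-t)*q2*(q2-1)/(t*(t-1)*(t-eta)))
  + a5*p1*(((t-s)*q1*(q1-1) + t*(t-1)*(q1-q2))/(t*(t-1)*(t-s))
      + (q1-t)*((t-1)*q1+(q1-t)*q2)/(t*(t-1)*(t-eta)))
  - p1*p2*(((t-1)*(s*q1^2+t*q2^2) - (t-s)*q2*(q1^2+t) - 2*t*(s-1)*q1*q2)/(t*(t-1)*(t-s))
      - (q1-t)^2*q2*(q2-1)/(t*(t-1)*(t-eta)))
  + a2*a5*(2*t*q1 - q1 - t*q2 + q1*q2 - eta*q1)/(t*(t-1)*(t-eta))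

/-- The second Hamiltonian `H₂ = π(H₁)` of system (1). -/
def H2 (eta a1 a2 a3 a4 a5 q1 p1 q2 p2 t s : ℂ) : ℂ :=
  H1 eta a1 a5 a3 a4 a2 q2 p2 q1 p1 s t

/-- Admissible independent variables: `t, s ∉ {0, 1, η}` and `t ≠ s`. -/
def Adm (eta t s : ℂ) : Prop :=
  t ≠ 0 ∧ t ≠ 1 ∧ t ≠ eta ∧ s ≠ 0 ∧ s ≠ 1 ∧ s ≠ eta ∧ t ≠ s

/-- `(q₁,p₁,q₂,p₂)` is a holomorphic solution of the Hamiltonian system (1) on the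
domain `D` with data `(η; α₀,α₁,α₂,α₃,α₄,α₅)`. -/
def IsSol (eta a0 a1 a2 a3 a4 a5 : ℂ) (D : Set (ℂ × ℂ))
    (q1 p1 q2 p2 : ℂ × ℂ → ℂ) : Prop :=
  IsOpen D ∧
  (∀ x ∈ D, Adm eta x.1 x.2) ∧
  DifferentiableOn ℂ q1 D ∧ DifferentiableOn ℂ p1 D ∧
  DifferentiableOn ℂ q2 D ∧ DifferentiableOn ℂ p2 D ∧
  ∀ x ∈ D,
    deriv (fun u => q1 (u, x.2)) x.1
      = deriv (fun y => H1 eta a1 a2 a3 a4 a5 (q1 x) y (q2 x) (p2 x) x.1 x.2) (p1 x) ∧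
    deriv (fun u => p1 (u, x.2)) x.1
      = - deriv (fun y => H1 eta a1 a2 a3 a4 a5 y (p1 x) (q2 x) (p2 x) x.1 x.2) (q1 x) ∧
    deriv (fun u => q2 (u, x.2)) x.1
      = deriv (fun y => H1 eta a1 a2 a3 a4 a5 (q1 x) (p1 x) (q2 x) y x.1 x.2) (p2 x) ∧
    deriv (fun u => p2 (u, x.2)) x.1
      = - deriv (fun y => H1 eta a1 a2 a3 a4 a5 (q1 x) (p1 x) y (p2 x) x.1 x.2) (q2 x) ∧
    deriv (fun u => q1 (x.1, u)) x.2
      = deriv (fun y => H2 eta a1 a2 a3 a4 a5 (q1 x) y (q2 x) (p2 x) x.1 x.2) (p1 x) ∧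
    deriv (fun u => p1 (x.1, u)) x.2
      = - deriv (fun y => H2 eta a1 a2 a3 a4 a5 y (p1 x) (q2 x) (p2 x) x.1 x.2) (q1 x) ∧
    deriv (fun u => q2 (x.1, u)) x.2
      = deriv (fun y => H2 eta a1 a2 a3 a4 a5 (q1 x) (p1 x) (q2 x) y x.1 x.2) (p2 x) ∧
    deriv (fun u => p2 (x.1, u)) x.2
      = - deriv (fun y => H2 eta a1 a2 a3 a4 a5 (q1 x) (p1 x) y (p2 x) x.1 x.2) (q2 x)

set_option maxHeartbeats 2000000
set_option maxRecDepth 100000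


theorem quartic_hasDerivAt (c0 c1 c2 c3 c4 d x : ℂ) :
    HasDerivAt (fun y : ℂ => (c0 + c1*y + c2*y^2 + c3*y^3 + c4*y^4)/d)
      ((c1 + 2*c2*x + 3*c3*x^2 + 4*c4*x^3)/d) x := by
  have h : HasDerivAt (fun y : ℂ => c0 + c1*y + c2*y^2 + c3*y^3 + c4*y^4)
      (c1 + 2*c2*x + 3*c3*x^2 + 4*c4*x^3) x := by
    have h1 : HasDerivAt (fun y : ℂ => c0 + c1*y + c2*y^2 + c3*y^3 + c4*y^4)
        (0 + c1*1 + c2*(2*x^1) + c3*(3*x^2) + c4*(4*x^3)) x :=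
      ((((hasDerivAt_const x c0).add ((hasDerivAt_id x).const_mul c1)).add
        ((hasDerivAt_pow 2 x).const_mul c2)).add ((hasDerivAt_pow 3 x).const_mul c3)).add
        ((hasDerivAt_pow 4 x).const_mul c4)
    convert h1 using 1
    ring
  exact h.div_const d

theorem combine_frac (X Y d v w : ℂ) (hd : d ≠ 0) (hv : v ≠ 0) (hw : w ≠ 0) :
    X/(d*v) + Y/(d*w) = (w*X + v*Y)/(d*v*w) := by
  field_simp

theorem cancel_div (A B d p : ℂ) (m : ℕ) (hp : p ≠ 0) (h : p^m * A = p^m * B) :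
    A/d = B/d := by
  rw [mul_left_cancel₀ (pow_ne_zero m hp) h]

theorem cancel_div3 (A B C d p a : ℂ) (m : ℕ) (hp : p ≠ 0)
    (h : p^m * (p^2*A) = p^m * (p^2*B + a*C)) : A/d = B/d + a/p^2 * (C/d) := by
  have h1 := mul_left_cancel₀ (pow_ne_zero m hp) h
  have h2 : A = B + a/p^2*C := by
    field_simp
    linear_combination h1
  rw [h2, add_div, mul_div_assoc]


theorem H1_eq (eta a1 a2 a3 a4 a5 q1 p1 q2 p2 t s : ℂ) (ht0 : t ≠ 0) (ht1 : t - 1 ≠ 0)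
    (hte : t - eta ≠ 0) (hts : t - s ≠ 0) :
    H1 eta a1 a2 a3 a4 a5 q1 p1 q2 p2 t s = (p1*q2^2*p2*t^2 + (-1)*p1*q2^2*p2*t^2*s + (-2)*q1*p1*q2*p2*t*s + 2*q1*p1*q2*p2*t^2*s + 2*q1*p1*q2^2*p2*t*s + (-2)*q1*p1*q2^2*p2*t^2 + q1^2*p1*p2*t*s + (-1)*q1^2*p1*p2*t^2*s + q1^2*p1*q2*p2*s + (-1)*q1^2*p1*q2*p2*t + (-1)*q1^2*p1*q2*p2*t*s + q1^2*p1*q2*p2*t^2 + (-1)*q1^2*p1*q2^2*p2*s + q1^2*p1*q2^2*p2*t + (-1)*q1^2*p1^2*t*s + q1^2*p1^2*t^2 + q1^3*p1^2*s + (-1)*q1^3*p1^2*t + q1^3*p1^2*t*s + (-1)*q1^3*p1^2*t^2 + (-1)*q1^4*p1^2*s + q1^4*p1^2*t + a5*p1*q2*t^2 + (-1)*a5*p1*q2*t^2*s + (-1)*a5*q1*p1*t^2 + a5*q1*p1*t^2*s + 2*a5*q1*p1*q2*t*s + (-2)*a5*q1*p1*q2*t^2 + a5*q1^2*p1*s +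 (-1)*a5*q1^2*p1*t + (-2)*a5*q1^2*p1*t*s + 2*a5*q1^2*p1*t^2 + (-1)*a5*q1^2*p1*q2*s + a5*q1^2*p1*q2*t + a4*q1*p1*t*s + (-1)*a4*q1*p1*t^2 + (-1)*a4*q1^2*p1*t*s + a4*q1^2*p1*t^2 + a3*q1^2*p1*s + (-1)*a3*q1^2*p1*t + (-1)*a3*q1^2*p1*t*s + a3*q1^2*p1*t^2 + (-1)*a2*q2*p2*t*s + a2*q2*p2*t^2*s + a2*q2^2*p2*t*s + (-1)*a2*q2^2*p2*t^2 + a2*q1*p2*t*s + (-1)*a2*q1*p2*t^2*s + a2*q1*q2*p2*s + (-1)*a2*q1*q2*p2*t + (-1)*a2*q1*q2*p2*t*s + a2*q1*q2*p2*t^2 + (-1)*a2*q1*q2^2*p2*s + a2*q1*q2^2*p2*t + 2*a2*q1^2*p1*s + (-2)*a2*q1^2*p1*t + (-2)*a2*q1^3*p1*s + 2*a2*q1^3*p1*t + a2*a5*q2*t*s + (-1)*a2*a5*q2*t^2 + a2*a5*q1*s + (-1)*a2*a5*q1*t + (-2)*a2*a5*q1*t*s + 2*a2*a5*q1*t^2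 + (-1)*a2*a5*q1*q2*s + a2*a5*q1*q2*t + (-1)*a2*a4*q1*t*s + a2*a4*q1*t^2 + a2*a3*q1*s + (-1)*a2*a3*q1*t + (-1)*a2*a3*q1*t*s + a2*a3*q1*t^2 + a2^2*q1*s + (-1)*a2^2*q1*t + (-1)*a2^2*q1*t*s + a2^2*q1*t^2 + (-1)*a2^2*q1^2*s + a2^2*q1^2*t + a1*q1*p1*t*s + (-1)*a1*q1*p1*t^2 + (-1)*a1*q1^2*p1*t*s + a1*q1^2*p1*t^2 + (-1)*a1*a2*q1*t*s + a1*a2*q1*t^2 + eta*p1*q2*p2*t*s + (-1)*eta*p1*q2*p2*t^2 + (-1)*eta*p1*q2^2*p2*t + eta*p1*q2^2*p2*t^2 + 2*eta*q1*p1*q2*p2*t + (-2)*eta*q1*p1*q2*p2*t*s + eta*q1*p1^2*t*s + (-1)*eta*q1*p1^2*t^2 + (-1)*eta*q1^2*p1*p2*s + eta*q1^2*p1*p2*t*s + eta*q1^2*p1*q2*p2*s + (-1)*eta*q1^2*p1*q2*p2*t + (-1)*eta*q1^2*p1^2*s + eta*q1^2*p1^2*t + (-1)*eta*q1^2*p1^2*t*s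 + eta*q1^2*p1^2*t^2 + eta*q1^3*p1^2*s + (-1)*eta*q1^3*p1^2*t + (-1)*eta*a5*p1*q2*t + eta*a5*p1*q2*t^2 + (-1)*eta*a5*q1*p1*s + 2*eta*a5*q1*p1*t + (-1)*eta*a5*q1*p1*t^2 + eta*a5*q1^2*p1*s + (-1)*eta*a5*q1^2*p1*t + (-1)*eta*a4*p1*t*s + eta*a4*p1*t^2 + eta*a4*q1*p1*t*s + (-1)*eta*a4*q1*p1*t^2 + (-1)*eta*a3*q1*p1*s + eta*a3*q1*p1*t + eta*a3*q1*p1*t*s + (-1)*eta*a3*q1*p1*t^2 + eta*a2*q2*p2*t + (-1)*eta*a2*q2*p2*t*s + (-1)*eta*a2*q1*p2*s + eta*a2*q1*p2*t*s + eta*a2*q1*q2*p2*s + (-1)*eta*a2*q1*q2*p2*t + (-2)*eta*a2*q1*p1*s + 2*eta*a2*q1*p1*t + 2*eta*a2*q1^2*p1*s + (-2)*eta*a2*q1^2*p1*t + eta*a2*a5*q1*s + (-1)*eta*a2*a5*q1*t + eta*a2^2*q1*s + (-1)*eta*a2^2*q1*t + (-1)*eta*a1*q1*p1*s + eta*a1*q1*p1*t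 + eta*a1*q1^2*p1*s + (-1)*eta*a1*q1^2*p1*t + eta*a1*a2*q1*s + (-1)*eta*a1*a2*q1*t) / (t*(t-1)*(t-eta)*(t-s)) := by
  have e0 : H1 eta a1 a2 a3 a4 a5 q1 p1 q2 p2 t s
      = (q1*(q1-1)*(q1-eta)*(q1-t)*p1^2
    + (a1*(t-eta)*q1*(q1-1) + 2*a2*q1*(q1-1)*(q1-eta) + a3*(t-1)*q1*(q1-eta)
        + a4*t*(q1-1)*(q1-eta))*p1
    + a2*((a1+a2)*(t-eta) + a2*(q1-1) + a3*(t-1) + t*a4)*q1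
    + a2*p2*((q1-t)*q2*(q2-1)) + a5*p1*((q1-t)*((t-1)*q1+(q1-t)*q2))
    + p1*p2*((q1-t)^2*q2*(q2-1)) + a2*a5*(2*t*q1 - q1 - t*q2 + q1*q2 - eta*q1)) / (t*(t-1)*(t-eta)) + (a2*p2*(-(t-1)*s*q1 + t*(s-1)*q2 + (t-s)*q1*q2)
    + a5*p1*((t-s)*q1*(q1-1) + t*(t-1)*(q1-q2))
    - p1*p2*((t-1)*(s*q1^2+t*q2^2) - (t-s)*q2*(q1^2+t) - 2*t*(s-1)*q1*q2)) / (t*(t-1)*(t-s)) := by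
    simp only [H1, Hvi]
    ring
  rw [e0, combine_frac _ _ _ _ _ (mul_ne_zero ht0 ht1) hte hts]
  congr 1
  ring


def dH1dq1 (eta a1 a2 a3 a4 a5 q1 p1 q2 p2 t s : ℂ) : ℂ :=
  (((-2)*p1*q2*p2*t*s + 2*p1*q2*p2*t^2*s + 2*p1*q2^2*p2*t*s + (-2)*p1*q2^2*p2*t^2 + (-1)*a5*p1*t^2 + a5*p1*t^2*s + 2*a5*p1*q2*t*s + (-2)*a5*p1*q2*t^2 + a4*p1*t*s + (-1)*a4*p1*t^2 + a2*p2*t*s + (-1)*a2*p2*t^2*s + a2*q2*p2*s + (-1)*a2*q2*p2*t + (-1)*a2*q2*p2*t*s + a2*q2*p2*t^2 + (-1)*a2*q2^2*p2*s + a2*q2^2*p2*t + a2*a5*s + (-1)*a2*a5*t + (-2)*a2*a5*t*s + 2*a2*a5*t^2 + (-1)*a2*a5*q2*s + a2*a5*q2*t + (-1)*a2*a4*t*s + a2*a4*t^2 + a2*a3*s + (-1)*a2*a3*t + (-1)*a2*a3*t*s + a2*a3*t^2 + a2^2*s + (-1)*a2^2*t + (-1)*a2^2*t*s + a2^2*t^2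 + a1*p1*t*s + (-1)*a1*p1*t^2 + (-1)*a1*a2*t*s + a1*a2*t^2 + 2*eta*p1*q2*p2*t + (-2)*eta*p1*q2*p2*t*s + eta*p1^2*t*s + (-1)*eta*p1^2*t^2 + (-1)*eta*a5*p1*s + 2*eta*a5*p1*t + (-1)*eta*a5*p1*t^2 + eta*a4*p1*t*s + (-1)*eta*a4*p1*t^2 + (-1)*eta*a3*p1*s + eta*a3*p1*t + eta*a3*p1*t*s + (-1)*eta*a3*p1*t^2 + (-1)*eta*a2*p2*s + eta*a2*p2*t*s + eta*a2*q2*p2*s + (-1)*eta*a2*q2*p2*t + (-2)*eta*a2*p1*s + 2*eta*a2*p1*t + eta*a2*a5*s + (-1)*eta*a2*a5*t + eta*a2^2*s + (-1)*eta*a2^2*t + (-1)*eta*a1*p1*s + eta*a1*p1*t + eta*a1*a2*s + (-1)*eta*a1*a2*t) + 2*(p1*p2*t*s + (-1)*p1*p2*t^2*s + p1*q2*p2*s + (-1)*p1*q2*p2*t + (-1)*p1*q2*p2*t*s + p1*q2*p2*t^2 + (-1)*p1*q2^2*p2*s + p1*q2^2*p2*t + (-1)*p1^2*t*s + p1^2*t^2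 + a5*p1*s + (-1)*a5*p1*t + (-2)*a5*p1*t*s + 2*a5*p1*t^2 + (-1)*a5*p1*q2*s + a5*p1*q2*t + (-1)*a4*p1*t*s + a4*p1*t^2 + a3*p1*s + (-1)*a3*p1*t + (-1)*a3*p1*t*s + a3*p1*t^2 + 2*a2*p1*s + (-2)*a2*p1*t + (-1)*a2^2*s + a2^2*t + (-1)*a1*p1*t*s + a1*p1*t^2 + (-1)*eta*p1*p2*s + eta*p1*p2*t*s + eta*p1*q2*p2*s + (-1)*eta*p1*q2*p2*t + (-1)*eta*p1^2*s + eta*p1^2*t + (-1)*eta*p1^2*t*s + eta*p1^2*t^2 + eta*a5*p1*s + (-1)*eta*a5*p1*t + 2*eta*a2*p1*s + (-2)*eta*a2*p1*t + eta*a1*p1*s + (-1)*eta*a1*p1*t)*q1 + 3*(p1^2*s + (-1)*p1^2*t + p1^2*t*s + (-1)*p1^2*t^2 + (-2)*a2*p1*s + 2*a2*p1*t + eta*p1^2*s + (-1)*eta*p1^2*t)*q1^2 + 4*((-1)*p1^2*s + p1^2*t)*q1^3) / (t*(t-1)*(t-eta)*(t-s))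

theorem slice_q1 (eta a1 a2 a3 a4 a5 q1 p1 q2 p2 t s : ℂ) (ht0 : t ≠ 0) (ht1 : t - 1 ≠ 0)
    (hte : t - eta ≠ 0) (hts : t - s ≠ 0) :
    deriv (fun y => H1 eta a1 a2 a3 a4 a5 y p1 q2 p2 t s) q1 = dH1dq1 eta a1 a2 a3 a4 a5 q1 p1 q2 p2 t s := by
  have e : (fun y => H1 eta a1 a2 a3 a4 a5 y p1 q2 p2 t s)
      = fun y => ((p1*q2^2*p2*t^2 + (-1)*p1*q2^2*p2*t^2*s + a5*p1*q2*t^2 + (-1)*a5*p1*q2*t^2*s + (-1)*a2*q2*p2*t*s + a2*q2*p2*t^2*s + a2*q2^2*p2*t*s + (-1)*a2*q2^2*p2*t^2 + a2*a5*q2*t*s + (-1)*a2*a5*q2*t^2 + eta*p1*q2*p2*t*s + (-1)*eta*p1*q2*p2*t^2 + (-1)*eta*p1*q2^2*p2*t + eta*p1*q2^2*p2*t^2 + (-1)*eta*a5*p1*q2*t + eta*a5*p1*q2*t^2 + (-1)*eta*a4*p1*t*s + eta*a4*p1*t^2 + eta*a2*q2*p2*t + (-1)*eta*a2*q2*p2*t*s)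 + ((-2)*p1*q2*p2*t*s + 2*p1*q2*p2*t^2*s + 2*p1*q2^2*p2*t*s + (-2)*p1*q2^2*p2*t^2 + (-1)*a5*p1*t^2 + a5*p1*t^2*s + 2*a5*p1*q2*t*s + (-2)*a5*p1*q2*t^2 + a4*p1*t*s + (-1)*a4*p1*t^2 + a2*p2*t*s + (-1)*a2*p2*t^2*s + a2*q2*p2*s + (-1)*a2*q2*p2*t + (-1)*a2*q2*p2*t*s + a2*q2*p2*t^2 + (-1)*a2*q2^2*p2*s + a2*q2^2*p2*t + a2*a5*s + (-1)*a2*a5*t + (-2)*a2*a5*t*s + 2*a2*a5*t^2 + (-1)*a2*a5*q2*s + a2*a5*q2*t + (-1)*a2*a4*t*s + a2*a4*t^2 + a2*a3*s + (-1)*a2*a3*t + (-1)*a2*a3*t*s + a2*a3*t^2 + a2^2*s + (-1)*a2^2*t + (-1)*a2^2*t*s + a2^2*t^2 + a1*p1*t*s + (-1)*a1*p1*t^2 + (-1)*a1*a2*t*s + a1*a2*t^2 + 2*eta*p1*q2*p2*t + (-2)*eta*p1*q2*p2*t*s + eta*p1^2*t*s + (-1)*eta*p1^2*t^2 + (-1)*eta*a5*p1*s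 + 2*eta*a5*p1*t + (-1)*eta*a5*p1*t^2 + eta*a4*p1*t*s + (-1)*eta*a4*p1*t^2 + (-1)*eta*a3*p1*s + eta*a3*p1*t + eta*a3*p1*t*s + (-1)*eta*a3*p1*t^2 + (-1)*eta*a2*p2*s + eta*a2*p2*t*s + eta*a2*q2*p2*s + (-1)*eta*a2*q2*p2*t + (-2)*eta*a2*p1*s + 2*eta*a2*p1*t + eta*a2*a5*s + (-1)*eta*a2*a5*t + eta*a2^2*s + (-1)*eta*a2^2*t + (-1)*eta*a1*p1*s + eta*a1*p1*t + eta*a1*a2*s + (-1)*eta*a1*a2*t)*y + (p1*p2*t*s + (-1)*p1*p2*t^2*s + p1*q2*p2*s + (-1)*p1*q2*p2*t + (-1)*p1*q2*p2*t*s + p1*q2*p2*t^2 + (-1)*p1*q2^2*p2*s + p1*q2^2*p2*t + (-1)*p1^2*t*s + p1^2*t^2 + a5*p1*s + (-1)*a5*p1*t + (-2)*a5*p1*t*s + 2*a5*p1*t^2 + (-1)*a5*p1*q2*s + a5*p1*q2*t + (-1)*a4*p1*t*s + a4*p1*t^2 + a3*p1*s + (-1)*a3*p1*t + (-1)*a3*p1*t*s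 + a3*p1*t^2 + 2*a2*p1*s + (-2)*a2*p1*t + (-1)*a2^2*s + a2^2*t + (-1)*a1*p1*t*s + a1*p1*t^2 + (-1)*eta*p1*p2*s + eta*p1*p2*t*s + eta*p1*q2*p2*s + (-1)*eta*p1*q2*p2*t + (-1)*eta*p1^2*s + eta*p1^2*t + (-1)*eta*p1^2*t*s + eta*p1^2*t^2 + eta*a5*p1*s + (-1)*eta*a5*p1*t + 2*eta*a2*p1*s + (-2)*eta*a2*p1*t + eta*a1*p1*s + (-1)*eta*a1*p1*t)*y^2 + (p1^2*s + (-1)*p1^2*t + p1^2*t*s + (-1)*p1^2*t^2 + (-2)*a2*p1*s + 2*a2*p1*t + eta*p1^2*s + (-1)*eta*p1^2*t)*y^3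
          + ((-1)*p1^2*s + p1^2*t)*y^4) / (t*(t-1)*(t-eta)*(t-s)) := by
    funext y
    rw [H1_eq eta a1 a2 a3 a4 a5 y p1 q2 p2 t s ht0 ht1 hte hts]
    congr 1
    ring
  rw [e, (quartic_hasDerivAt _ _ _ _ _ _ _).deriv, dH1dq1]


def dH1dp1 (eta a1 a2 a3 a4 a5 q1 p1 q2 p2 t s : ℂ) : ℂ :=
  ((q2^2*p2*t^2 + (-1)*q2^2*p2*t^2*s + (-2)*q1*q2*p2*t*s + 2*q1*q2*p2*t^2*s + 2*q1*q2^2*p2*t*s + (-2)*q1*q2^2*p2*t^2 + q1^2*p2*t*s + (-1)*q1^2*p2*t^2*s + q1^2*q2*p2*s + (-1)*q1^2*q2*p2*t + (-1)*q1^2*q2*p2*t*s + q1^2*q2*p2*t^2 + (-1)*q1^2*q2^2*p2*s + q1^2*q2^2*p2*t + a5*q2*t^2 + (-1)*a5*q2*t^2*s + (-1)*a5*q1*t^2 + a5*q1*t^2*s + 2*a5*q1*q2*t*s + (-2)*a5*q1*q2*t^2 + a5*q1^2*s + (-1)*a5*q1^2*t + (-2)*a5*q1^2*t*s + 2*a5*q1^2*t^2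 + (-1)*a5*q1^2*q2*s + a5*q1^2*q2*t + a4*q1*t*s + (-1)*a4*q1*t^2 + (-1)*a4*q1^2*t*s + a4*q1^2*t^2 + a3*q1^2*s + (-1)*a3*q1^2*t + (-1)*a3*q1^2*t*s + a3*q1^2*t^2 + 2*a2*q1^2*s + (-2)*a2*q1^2*t + (-2)*a2*q1^3*s + 2*a2*q1^3*t + a1*q1*t*s + (-1)*a1*q1*t^2 + (-1)*a1*q1^2*t*s + a1*q1^2*t^2 + eta*q2*p2*t*s + (-1)*eta*q2*p2*t^2 + (-1)*eta*q2^2*p2*t + eta*q2^2*p2*t^2 + 2*eta*q1*q2*p2*t + (-2)*eta*q1*q2*p2*t*s + (-1)*eta*q1^2*p2*s + eta*q1^2*p2*t*s + eta*q1^2*q2*p2*s + (-1)*eta*q1^2*q2*p2*t + (-1)*eta*a5*q2*t + eta*a5*q2*t^2 + (-1)*eta*a5*q1*s + 2*eta*a5*q1*t + (-1)*eta*a5*q1*t^2 + eta*a5*q1^2*s + (-1)*eta*a5*q1^2*t + (-1)*eta*a4*t*s + eta*a4*t^2 + eta*a4*q1*t*s + (-1)*eta*a4*q1*t^2 + (-1)*eta*a3*q1*s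 + eta*a3*q1*t + eta*a3*q1*t*s + (-1)*eta*a3*q1*t^2 + (-2)*eta*a2*q1*s + 2*eta*a2*q1*t + 2*eta*a2*q1^2*s + (-2)*eta*a2*q1^2*t + (-1)*eta*a1*q1*s + eta*a1*q1*t + eta*a1*q1^2*s + (-1)*eta*a1*q1^2*t) + 2*((-1)*q1^2*t*s + q1^2*t^2 + q1^3*s + (-1)*q1^3*t + q1^3*t*s + (-1)*q1^3*t^2 + (-1)*q1^4*s + q1^4*t + eta*q1*t*s + (-1)*eta*q1*t^2 + (-1)*eta*q1^2*s + eta*q1^2*t + (-1)*eta*q1^2*t*s + eta*q1^2*t^2 + eta*q1^3*s + (-1)*eta*q1^3*t)*p1 + 3*(0)*p1^2 + 4*(0)*p1^3) / (t*(t-1)*(t-eta)*(t-s))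

theorem slice_p1 (eta a1 a2 a3 a4 a5 q1 p1 q2 p2 t s : ℂ) (ht0 : t ≠ 0) (ht1 : t - 1 ≠ 0)
    (hte : t - eta ≠ 0) (hts : t - s ≠ 0) :
    deriv (fun y => H1 eta a1 a2 a3 a4 a5 q1 y q2 p2 t s) p1 = dH1dp1 eta a1 a2 a3 a4 a5 q1 p1 q2 p2 t s := by
  have e : (fun y => H1 eta a1 a2 a3 a4 a5 q1 y q2 p2 t s)
      = fun y => (((-1)*a2*q2*p2*t*s + a2*q2*p2*t^2*s + a2*q2^2*p2*t*s + (-1)*a2*q2^2*p2*t^2 + a2*q1*p2*t*s + (-1)*a2*q1*p2*t^2*s + a2*q1*q2*p2*s + (-1)*a2*q1*q2*p2*t + (-1)*a2*q1*q2*p2*t*s + a2*q1*q2*p2*t^2 + (-1)*a2*q1*q2^2*p2*s + a2*q1*q2^2*p2*t + a2*a5*q2*t*s + (-1)*a2*a5*q2*t^2 + a2*a5*q1*s + (-1)*a2*a5*q1*t + (-2)*a2*a5*q1*t*s + 2*a2*a5*q1*t^2 + (-1)*a2*a5*q1*q2*s + a2*a5*q1*q2*t + (-1)*a2*a4*q1*t*s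 + a2*a4*q1*t^2 + a2*a3*q1*s + (-1)*a2*a3*q1*t + (-1)*a2*a3*q1*t*s + a2*a3*q1*t^2 + a2^2*q1*s + (-1)*a2^2*q1*t + (-1)*a2^2*q1*t*s + a2^2*q1*t^2 + (-1)*a2^2*q1^2*s + a2^2*q1^2*t + (-1)*a1*a2*q1*t*s + a1*a2*q1*t^2 + eta*a2*q2*p2*t + (-1)*eta*a2*q2*p2*t*s + (-1)*eta*a2*q1*p2*s + eta*a2*q1*p2*t*s + eta*a2*q1*q2*p2*s + (-1)*eta*a2*q1*q2*p2*t + eta*a2*a5*q1*s + (-1)*eta*a2*a5*q1*t + eta*a2^2*q1*s + (-1)*eta*a2^2*q1*t + eta*a1*a2*q1*s + (-1)*eta*a1*a2*q1*t) + (q2^2*p2*t^2 + (-1)*q2^2*p2*t^2*s + (-2)*q1*q2*p2*t*s + 2*q1*q2*p2*t^2*s + 2*q1*q2^2*p2*t*s + (-2)*q1*q2^2*p2*t^2 + q1^2*p2*t*s + (-1)*q1^2*p2*t^2*s + q1^2*q2*p2*s + (-1)*q1^2*q2*p2*t + (-1)*q1^2*q2*p2*t*s + q1^2*q2*p2*t^2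 + (-1)*q1^2*q2^2*p2*s + q1^2*q2^2*p2*t + a5*q2*t^2 + (-1)*a5*q2*t^2*s + (-1)*a5*q1*t^2 + a5*q1*t^2*s + 2*a5*q1*q2*t*s + (-2)*a5*q1*q2*t^2 + a5*q1^2*s + (-1)*a5*q1^2*t + (-2)*a5*q1^2*t*s + 2*a5*q1^2*t^2 + (-1)*a5*q1^2*q2*s + a5*q1^2*q2*t + a4*q1*t*s + (-1)*a4*q1*t^2 + (-1)*a4*q1^2*t*s + a4*q1^2*t^2 + a3*q1^2*s + (-1)*a3*q1^2*t + (-1)*a3*q1^2*t*s + a3*q1^2*t^2 + 2*a2*q1^2*s + (-2)*a2*q1^2*t + (-2)*a2*q1^3*s + 2*a2*q1^3*t + a1*q1*t*s + (-1)*a1*q1*t^2 + (-1)*a1*q1^2*t*s + a1*q1^2*t^2 + eta*q2*p2*t*s + (-1)*eta*q2*p2*t^2 + (-1)*eta*q2^2*p2*t + eta*q2^2*p2*t^2 + 2*eta*q1*q2*p2*t + (-2)*eta*q1*q2*p2*t*s + (-1)*eta*q1^2*p2*s + eta*q1^2*p2*t*s + eta*q1^2*q2*p2*s + (-1)*eta*q1^2*q2*p2*t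 + (-1)*eta*a5*q2*t + eta*a5*q2*t^2 + (-1)*eta*a5*q1*s + 2*eta*a5*q1*t + (-1)*eta*a5*q1*t^2 + eta*a5*q1^2*s + (-1)*eta*a5*q1^2*t + (-1)*eta*a4*t*s + eta*a4*t^2 + eta*a4*q1*t*s + (-1)*eta*a4*q1*t^2 + (-1)*eta*a3*q1*s + eta*a3*q1*t + eta*a3*q1*t*s + (-1)*eta*a3*q1*t^2 + (-2)*eta*a2*q1*s + 2*eta*a2*q1*t + 2*eta*a2*q1^2*s + (-2)*eta*a2*q1^2*t + (-1)*eta*a1*q1*s + eta*a1*q1*t + eta*a1*q1^2*s + (-1)*eta*a1*q1^2*t)*y + ((-1)*q1^2*t*s + q1^2*t^2 + q1^3*s + (-1)*q1^3*t + q1^3*t*s + (-1)*q1^3*t^2 + (-1)*q1^4*s + q1^4*t + eta*q1*t*s + (-1)*eta*q1*t^2 + (-1)*eta*q1^2*s + eta*q1^2*t + (-1)*eta*q1^2*t*s + eta*q1^2*t^2 + eta*q1^3*s + (-1)*eta*q1^3*t)*y^2 + (0)*y^3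
          + (0)*y^4) / (t*(t-1)*(t-eta)*(t-s)) := by
    funext y
    rw [H1_eq eta a1 a2 a3 a4 a5 q1 y q2 p2 t s ht0 ht1 hte hts]
    congr 1
    ring
  rw [e, (quartic_hasDerivAt _ _ _ _ _ _ _).deriv, dH1dp1]


def dH1dq2 (eta a1 a2 a3 a4 a5 q1 p1 q2 p2 t s : ℂ) : ℂ :=
  (((-2)*q1*p1*p2*t*s + 2*q1*p1*p2*t^2*s + q1^2*p1*p2*s + (-1)*q1^2*p1*p2*t + (-1)*q1^2*p1*p2*t*s + q1^2*p1*p2*t^2 + a5*p1*t^2 + (-1)*a5*p1*t^2*s + 2*a5*q1*p1*t*s + (-2)*a5*q1*p1*t^2 + (-1)*a5*q1^2*p1*s + a5*q1^2*p1*t + (-1)*a2*p2*t*s + a2*p2*t^2*s + a2*q1*p2*s + (-1)*a2*q1*p2*t + (-1)*a2*q1*p2*t*s + a2*q1*p2*t^2 + a2*a5*t*s + (-1)*a2*a5*t^2 + (-1)*a2*a5*q1*s + a2*a5*q1*t + eta*p1*p2*t*s + (-1)*eta*p1*p2*t^2 + 2*eta*q1*p1*p2*t + (-2)*eta*q1*p1*p2*t*s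 + eta*q1^2*p1*p2*s + (-1)*eta*q1^2*p1*p2*t + (-1)*eta*a5*p1*t + eta*a5*p1*t^2 + eta*a2*p2*t + (-1)*eta*a2*p2*t*s + eta*a2*q1*p2*s + (-1)*eta*a2*q1*p2*t) + 2*(p1*p2*t^2 + (-1)*p1*p2*t^2*s + 2*q1*p1*p2*t*s + (-2)*q1*p1*p2*t^2 + (-1)*q1^2*p1*p2*s + q1^2*p1*p2*t + a2*p2*t*s + (-1)*a2*p2*t^2 + (-1)*a2*q1*p2*s + a2*q1*p2*t + (-1)*eta*p1*p2*t + eta*p1*p2*t^2)*q2 + 3*(0)*q2^2 + 4*(0)*q2^3) / (t*(t-1)*(t-eta)*(t-s))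

theorem slice_q2 (eta a1 a2 a3 a4 a5 q1 p1 q2 p2 t s : ℂ) (ht0 : t ≠ 0) (ht1 : t - 1 ≠ 0)
    (hte : t - eta ≠ 0) (hts : t - s ≠ 0) :
    deriv (fun y => H1 eta a1 a2 a3 a4 a5 q1 p1 y p2 t s) q2 = dH1dq2 eta a1 a2 a3 a4 a5 q1 p1 q2 p2 t s := by
  have e : (fun y => H1 eta a1 a2 a3 a4 a5 q1 p1 y p2 t s)
      = fun y => ((q1^2*p1*p2*t*s + (-1)*q1^2*p1*p2*t^2*s + (-1)*q1^2*p1^2*t*s + q1^2*p1^2*t^2 + q1^3*p1^2*s + (-1)*q1^3*p1^2*t + q1^3*p1^2*t*s + (-1)*q1^3*p1^2*t^2 + (-1)*q1^4*p1^2*s + q1^4*p1^2*t + (-1)*a5*q1*p1*t^2 + a5*q1*p1*t^2*s + a5*q1^2*p1*s + (-1)*a5*q1^2*p1*t + (-2)*a5*q1^2*p1*t*s + 2*a5*q1^2*p1*t^2 + a4*q1*p1*t*s + (-1)*a4*q1*p1*t^2 + (-1)*a4*q1^2*p1*t*s + a4*q1^2*p1*t^2 + a3*q1^2*p1*s + (-1)*a3*q1^2*p1*t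 + (-1)*a3*q1^2*p1*t*s + a3*q1^2*p1*t^2 + a2*q1*p2*t*s + (-1)*a2*q1*p2*t^2*s + 2*a2*q1^2*p1*s + (-2)*a2*q1^2*p1*t + (-2)*a2*q1^3*p1*s + 2*a2*q1^3*p1*t + a2*a5*q1*s + (-1)*a2*a5*q1*t + (-2)*a2*a5*q1*t*s + 2*a2*a5*q1*t^2 + (-1)*a2*a4*q1*t*s + a2*a4*q1*t^2 + a2*a3*q1*s + (-1)*a2*a3*q1*t + (-1)*a2*a3*q1*t*s + a2*a3*q1*t^2 + a2^2*q1*s + (-1)*a2^2*q1*t + (-1)*a2^2*q1*t*s + a2^2*q1*t^2 + (-1)*a2^2*q1^2*s + a2^2*q1^2*t + a1*q1*p1*t*s + (-1)*a1*q1*p1*t^2 + (-1)*a1*q1^2*p1*t*s + a1*q1^2*p1*t^2 + (-1)*a1*a2*q1*t*s + a1*a2*q1*t^2 + eta*q1*p1^2*t*s + (-1)*eta*q1*p1^2*t^2 + (-1)*eta*q1^2*p1*p2*s + eta*q1^2*p1*p2*t*s + (-1)*eta*q1^2*p1^2*s + eta*q1^2*p1^2*t + (-1)*eta*q1^2*p1^2*t*s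 + eta*q1^2*p1^2*t^2 + eta*q1^3*p1^2*s + (-1)*eta*q1^3*p1^2*t + (-1)*eta*a5*q1*p1*s + 2*eta*a5*q1*p1*t + (-1)*eta*a5*q1*p1*t^2 + eta*a5*q1^2*p1*s + (-1)*eta*a5*q1^2*p1*t + (-1)*eta*a4*p1*t*s + eta*a4*p1*t^2 + eta*a4*q1*p1*t*s + (-1)*eta*a4*q1*p1*t^2 + (-1)*eta*a3*q1*p1*s + eta*a3*q1*p1*t + eta*a3*q1*p1*t*s + (-1)*eta*a3*q1*p1*t^2 + (-1)*eta*a2*q1*p2*s + eta*a2*q1*p2*t*s + (-2)*eta*a2*q1*p1*s + 2*eta*a2*q1*p1*t + 2*eta*a2*q1^2*p1*s + (-2)*eta*a2*q1^2*p1*t + eta*a2*a5*q1*s + (-1)*eta*a2*a5*q1*t + eta*a2^2*q1*s + (-1)*eta*a2^2*q1*t + (-1)*eta*a1*q1*p1*s + eta*a1*q1*p1*t + eta*a1*q1^2*p1*s + (-1)*eta*a1*q1^2*p1*t + eta*a1*a2*q1*s + (-1)*eta*a1*a2*q1*t) + ((-2)*q1*p1*p2*t*s + 2*q1*p1*p2*t^2*s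 + q1^2*p1*p2*s + (-1)*q1^2*p1*p2*t + (-1)*q1^2*p1*p2*t*s + q1^2*p1*p2*t^2 + a5*p1*t^2 + (-1)*a5*p1*t^2*s + 2*a5*q1*p1*t*s + (-2)*a5*q1*p1*t^2 + (-1)*a5*q1^2*p1*s + a5*q1^2*p1*t + (-1)*a2*p2*t*s + a2*p2*t^2*s + a2*q1*p2*s + (-1)*a2*q1*p2*t + (-1)*a2*q1*p2*t*s + a2*q1*p2*t^2 + a2*a5*t*s + (-1)*a2*a5*t^2 + (-1)*a2*a5*q1*s + a2*a5*q1*t + eta*p1*p2*t*s + (-1)*eta*p1*p2*t^2 + 2*eta*q1*p1*p2*t + (-2)*eta*q1*p1*p2*t*s + eta*q1^2*p1*p2*s + (-1)*eta*q1^2*p1*p2*t + (-1)*eta*a5*p1*t + eta*a5*p1*t^2 + eta*a2*p2*t + (-1)*eta*a2*p2*t*s + eta*a2*q1*p2*s + (-1)*eta*a2*q1*p2*t)*y + (p1*p2*t^2 + (-1)*p1*p2*t^2*s + 2*q1*p1*p2*t*s + (-2)*q1*p1*p2*t^2 + (-1)*q1^2*p1*p2*s + q1^2*p1*p2*t + a2*p2*t*s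 + (-1)*a2*p2*t^2 + (-1)*a2*q1*p2*s + a2*q1*p2*t + (-1)*eta*p1*p2*t + eta*p1*p2*t^2)*y^2 + (0)*y^3
          + (0)*y^4) / (t*(t-1)*(t-eta)*(t-s)) := by
    funext y
    rw [H1_eq eta a1 a2 a3 a4 a5 q1 p1 y p2 t s ht0 ht1 hte hts]
    congr 1
    ring
  rw [e, (quartic_hasDerivAt _ _ _ _ _ _ _).deriv, dH1dq2]


def dH1dp2 (eta a1 a2 a3 a4 a5 q1 p1 q2 p2 t s : ℂ) : ℂ :=
  ((p1*q2^2*t^2 + (-1)*p1*q2^2*t^2*s + (-2)*q1*p1*q2*t*s + 2*q1*p1*q2*t^2*s + 2*q1*p1*q2^2*t*s + (-2)*q1*p1*q2^2*t^2 + q1^2*p1*t*s + (-1)*q1^2*p1*t^2*s + q1^2*p1*q2*s + (-1)*q1^2*p1*q2*t + (-1)*q1^2*p1*q2*t*s + q1^2*p1*q2*t^2 + (-1)*q1^2*p1*q2^2*s + q1^2*p1*q2^2*t + (-1)*a2*q2*t*s + a2*q2*t^2*s + a2*q2^2*t*s + (-1)*a2*q2^2*t^2 + a2*q1*t*s + (-1)*a2*q1*t^2*s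 + a2*q1*q2*s + (-1)*a2*q1*q2*t + (-1)*a2*q1*q2*t*s + a2*q1*q2*t^2 + (-1)*a2*q1*q2^2*s + a2*q1*q2^2*t + eta*p1*q2*t*s + (-1)*eta*p1*q2*t^2 + (-1)*eta*p1*q2^2*t + eta*p1*q2^2*t^2 + 2*eta*q1*p1*q2*t + (-2)*eta*q1*p1*q2*t*s + (-1)*eta*q1^2*p1*s + eta*q1^2*p1*t*s + eta*q1^2*p1*q2*s + (-1)*eta*q1^2*p1*q2*t + eta*a2*q2*t + (-1)*eta*a2*q2*t*s + (-1)*eta*a2*q1*s + eta*a2*q1*t*s + eta*a2*q1*q2*s + (-1)*eta*a2*q1*q2*t) + 2*(0)*p2 + 3*(0)*p2^2 + 4*(0)*p2^3) / (t*(t-1)*(t-eta)*(t-s))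

theorem slice_p2 (eta a1 a2 a3 a4 a5 q1 p1 q2 p2 t s : ℂ) (ht0 : t ≠ 0) (ht1 : t - 1 ≠ 0)
    (hte : t - eta ≠ 0) (hts : t - s ≠ 0) :
    deriv (fun y => H1 eta a1 a2 a3 a4 a5 q1 p1 q2 y t s) p2 = dH1dp2 eta a1 a2 a3 a4 a5 q1 p1 q2 p2 t s := by
  have e : (fun y => H1 eta a1 a2 a3 a4 a5 q1 p1 q2 y t s)
      = fun y => (((-1)*q1^2*p1^2*t*s + q1^2*p1^2*t^2 + q1^3*p1^2*s + (-1)*q1^3*p1^2*t + q1^3*p1^2*t*s + (-1)*q1^3*p1^2*t^2 + (-1)*q1^4*p1^2*s + q1^4*p1^2*t + a5*p1*q2*t^2 + (-1)*a5*p1*q2*t^2*s + (-1)*a5*q1*p1*t^2 + a5*q1*p1*t^2*s + 2*a5*q1*p1*q2*t*s + (-2)*a5*q1*p1*q2*t^2 + a5*q1^2*p1*s + (-1)*a5*q1^2*p1*t + (-2)*a5*q1^2*p1*t*s + 2*a5*q1^2*p1*t^2 + (-1)*a5*q1^2*p1*q2*s + a5*q1^2*p1*q2*t + a4*q1*p1*t*s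 + (-1)*a4*q1*p1*t^2 + (-1)*a4*q1^2*p1*t*s + a4*q1^2*p1*t^2 + a3*q1^2*p1*s + (-1)*a3*q1^2*p1*t + (-1)*a3*q1^2*p1*t*s + a3*q1^2*p1*t^2 + 2*a2*q1^2*p1*s + (-2)*a2*q1^2*p1*t + (-2)*a2*q1^3*p1*s + 2*a2*q1^3*p1*t + a2*a5*q2*t*s + (-1)*a2*a5*q2*t^2 + a2*a5*q1*s + (-1)*a2*a5*q1*t + (-2)*a2*a5*q1*t*s + 2*a2*a5*q1*t^2 + (-1)*a2*a5*q1*q2*s + a2*a5*q1*q2*t + (-1)*a2*a4*q1*t*s + a2*a4*q1*t^2 + a2*a3*q1*s + (-1)*a2*a3*q1*t + (-1)*a2*a3*q1*t*s + a2*a3*q1*t^2 + a2^2*q1*s + (-1)*a2^2*q1*t + (-1)*a2^2*q1*t*s + a2^2*q1*t^2 + (-1)*a2^2*q1^2*s + a2^2*q1^2*t + a1*q1*p1*t*s + (-1)*a1*q1*p1*t^2 + (-1)*a1*q1^2*p1*t*s + a1*q1^2*p1*t^2 + (-1)*a1*a2*q1*t*s + a1*a2*q1*t^2 + eta*q1*p1^2*t*s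 + (-1)*eta*q1*p1^2*t^2 + (-1)*eta*q1^2*p1^2*s + eta*q1^2*p1^2*t + (-1)*eta*q1^2*p1^2*t*s + eta*q1^2*p1^2*t^2 + eta*q1^3*p1^2*s + (-1)*eta*q1^3*p1^2*t + (-1)*eta*a5*p1*q2*t + eta*a5*p1*q2*t^2 + (-1)*eta*a5*q1*p1*s + 2*eta*a5*q1*p1*t + (-1)*eta*a5*q1*p1*t^2 + eta*a5*q1^2*p1*s + (-1)*eta*a5*q1^2*p1*t + (-1)*eta*a4*p1*t*s + eta*a4*p1*t^2 + eta*a4*q1*p1*t*s + (-1)*eta*a4*q1*p1*t^2 + (-1)*eta*a3*q1*p1*s + eta*a3*q1*p1*t + eta*a3*q1*p1*t*s + (-1)*eta*a3*q1*p1*t^2 + (-2)*eta*a2*q1*p1*s + 2*eta*a2*q1*p1*t + 2*eta*a2*q1^2*p1*s + (-2)*eta*a2*q1^2*p1*t + eta*a2*a5*q1*s + (-1)*eta*a2*a5*q1*t + eta*a2^2*q1*s + (-1)*eta*a2^2*q1*t + (-1)*eta*a1*q1*p1*s + eta*a1*q1*p1*t + eta*a1*q1^2*p1*s + (-1)*eta*a1*q1^2*p1*t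 + eta*a1*a2*q1*s + (-1)*eta*a1*a2*q1*t) + (p1*q2^2*t^2 + (-1)*p1*q2^2*t^2*s + (-2)*q1*p1*q2*t*s + 2*q1*p1*q2*t^2*s + 2*q1*p1*q2^2*t*s + (-2)*q1*p1*q2^2*t^2 + q1^2*p1*t*s + (-1)*q1^2*p1*t^2*s + q1^2*p1*q2*s + (-1)*q1^2*p1*q2*t + (-1)*q1^2*p1*q2*t*s + q1^2*p1*q2*t^2 + (-1)*q1^2*p1*q2^2*s + q1^2*p1*q2^2*t + (-1)*a2*q2*t*s + a2*q2*t^2*s + a2*q2^2*t*s + (-1)*a2*q2^2*t^2 + a2*q1*t*s + (-1)*a2*q1*t^2*s + a2*q1*q2*s + (-1)*a2*q1*q2*t + (-1)*a2*q1*q2*t*s + a2*q1*q2*t^2 + (-1)*a2*q1*q2^2*s + a2*q1*q2^2*t + eta*p1*q2*t*s + (-1)*eta*p1*q2*t^2 + (-1)*eta*p1*q2^2*t + eta*p1*q2^2*t^2 + 2*eta*q1*p1*q2*t + (-2)*eta*q1*p1*q2*t*s + (-1)*eta*q1^2*p1*s + eta*q1^2*p1*t*s + eta*q1^2*p1*q2*s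 + (-1)*eta*q1^2*p1*q2*t + eta*a2*q2*t + (-1)*eta*a2*q2*t*s + (-1)*eta*a2*q1*s + eta*a2*q1*t*s + eta*a2*q1*q2*s + (-1)*eta*a2*q1*q2*t)*y + (0)*y^2 + (0)*y^3
          + (0)*y^4) / (t*(t-1)*(t-eta)*(t-s)) := by
    funext y
    rw [H1_eq eta a1 a2 a3 a4 a5 q1 p1 q2 y t s ht0 ht1 hte hts]
    congr 1
    ring
  rw [e, (quartic_hasDerivAt _ _ _ _ _ _ _).deriv, dH1dp2]


theorem ident1 (eta a1 a2 a3 a4 a5 q1 p1 q2 p2 t s r : ℂ) (hp2 : p2 ≠ 0) (hr : p2 * r = a5) :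
    dH1dp1 eta (a1+a5) a2 (a3+a5) (a4+a5) (-a5) q1 p1 (q2 + r) p2 t s = dH1dp1 eta a1 a2 a3 a4 a5 q1 p1 q2 p2 t s := by
  simp only [dH1dp1]
  exact cancel_div _ _ _ p2 2 hp2 (by linear_combination (p2^2*t^2*r + (-1)*p2^2*t^2*s*r + 2*q2*p2^2*t^2 + (-2)*q2*p2^2*t^2*s + (-2)*q1*p2^2*t*s + 2*q1*p2^2*t*s*r + (-2)*q1*p2^2*t^2*r + 2*q1*p2^2*t^2*s + 4*q1*q2*p2^2*t*s + (-4)*q1*q2*p2^2*t^2 + q1^2*p2^2*s + (-1)*q1^2*p2^2*s*r + (-1)*q1^2*p2^2*t + q1^2*p2^2*t*r + (-1)*q1^2*p2^2*t*s + q1^2*p2^2*t^2 + (-2)*q1^2*q2*p2^2*s + 2*q1^2*q2*p2^2*t + (-1)*eta*p2^2*t*r + eta*p2^2*t*s + (-1)*eta*p2^2*t^2 + eta*p2^2*t^2*r + (-2)*eta*q2*p2^2*t + 2*eta*q2*p2^2*t^2 + 2*eta*q1*p2^2*t + (-2)*eta*q1*p2^2*t*s + eta*q1^2*p2^2*s +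 (-1)*eta*q1^2*p2^2*t) * hr)


theorem ident2 (eta a1 a2 a3 a4 a5 q1 p1 q2 p2 t s r : ℂ) (hp2 : p2 ≠ 0) (hr : p2 * r = a5) :
    dH1dq1 eta (a1+a5) a2 (a3+a5) (a4+a5) (-a5) q1 p1 (q2 + r) p2 t s = dH1dq1 eta a1 a2 a3 a4 a5 q1 p1 q2 p2 t s := by
  simp only [dH1dq1]
  exact cancel_div _ _ _ p2 2 hp2 (by linear_combination ((-2)*p1*p2^2*t*s + 2*p1*p2^2*t*s*r + (-2)*p1*p2^2*t^2*r + 2*p1*p2^2*t^2*s + 4*p1*q2*p2^2*t*s + (-4)*p1*q2*p2^2*t^2 + 2*q1*p1*p2^2*s + (-2)*q1*p1*p2^2*s*r + (-2)*q1*p1*p2^2*t + 2*q1*p1*p2^2*t*r + (-2)*q1*p1*p2^2*t*s + 2*q1*p1*p2^2*t^2 + (-4)*q1*p1*q2*p2^2*s + 4*q1*p1*q2*p2^2*t + a2*p2^2*s + (-1)*a2*p2^2*s*r + (-1)*a2*p2^2*t + a2*p2^2*t*r + (-1)*a2*p2^2*t*s + a2*p2^2*t^2 + (-2)*a2*q2*p2^2*s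 + 2*a2*q2*p2^2*t + 2*eta*p1*p2^2*t + (-2)*eta*p1*p2^2*t*s + 2*eta*q1*p1*p2^2*s + (-2)*eta*q1*p1*p2^2*t + eta*a2*p2^2*s + (-1)*eta*a2*p2^2*t) * hr)


theorem ident3 (eta a1 a2 a3 a4 a5 q1 p1 q2 p2 t s r : ℂ) (hp2 : p2 ≠ 0) (hr : p2 * r = a5) :
    dH1dp2 eta (a1+a5) a2 (a3+a5) (a4+a5) (-a5) q1 p1 (q2 + r) p2 t s = dH1dp2 eta a1 a2 a3 a4 a5 q1 p1 q2 p2 t s + a5/p2^2 * dH1dq2 eta a1 a2 a3 a4 a5 q1 p1 q2 p2 t s := by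
  simp only [dH1dp2, dH1dq2]
  exact cancel_div3 _ _ _ _ p2 a5 2 hp2 (by linear_combination (p1*p2^3*t^2*r + (-1)*p1*p2^3*t^2*s*r + 2*p1*q2*p2^3*t^2 + (-2)*p1*q2*p2^3*t^2*s + (-2)*q1*p1*p2^3*t*s + 2*q1*p1*p2^3*t*s*r + (-2)*q1*p1*p2^3*t^2*r + 2*q1*p1*p2^3*t^2*s + 4*q1*p1*q2*p2^3*t*s + (-4)*q1*p1*q2*p2^3*t^2 + q1^2*p1*p2^3*s + (-1)*q1^2*p1*p2^3*s*r + (-1)*q1^2*p1*p2^3*t + q1^2*p1*p2^3*t*r + (-1)*q1^2*p1*p2^3*t*s + q1^2*p1*p2^3*t^2 + (-2)*q1^2*p1*q2*p2^3*s + 2*q1^2*p1*q2*p2^3*t + a5*p1*p2^2*t^2 + (-1)*a5*p1*p2^2*t^2*s + 2*a5*q1*p1*p2^2*t*s + (-2)*a5*q1*p1*p2^2*t^2 + (-1)*a5*q1^2*p1*p2^2*s + a5*q1^2*p1*p2^2*t + (-1)*a2*p2^3*t*s + a2*p2^3*t*s*r + (-1)*a2*p2^3*t^2*r + a2*p2^3*t^2*s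 + 2*a2*q2*p2^3*t*s + (-2)*a2*q2*p2^3*t^2 + a2*q1*p2^3*s + (-1)*a2*q1*p2^3*s*r + (-1)*a2*q1*p2^3*t + a2*q1*p2^3*t*r + (-1)*a2*q1*p2^3*t*s + a2*q1*p2^3*t^2 + (-2)*a2*q1*q2*p2^3*s + 2*a2*q1*q2*p2^3*t + a2*a5*p2^2*t*s + (-1)*a2*a5*p2^2*t^2 + (-1)*a2*a5*q1*p2^2*s + a2*a5*q1*p2^2*t + (-1)*eta*p1*p2^3*t*r + eta*p1*p2^3*t*s + (-1)*eta*p1*p2^3*t^2 + eta*p1*p2^3*t^2*r + (-2)*eta*p1*q2*p2^3*t + 2*eta*p1*q2*p2^3*t^2 + 2*eta*q1*p1*p2^3*t + (-2)*eta*q1*p1*p2^3*t*s + eta*q1^2*p1*p2^3*s + (-1)*eta*q1^2*p1*p2^3*t + (-1)*eta*a5*p1*p2^2*t + eta*a5*p1*p2^2*t^2 + eta*a2*p2^3*t + (-1)*eta*a2*p2^3*t*s + eta*a2*q1*p2^3*s + (-1)*eta*a2*q1*p2^3*t) * hr)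


theorem ident4 (eta a1 a2 a3 a4 a5 q1 p1 q2 p2 t s r : ℂ) (hp2 : p2 ≠ 0) (hr : p2 * r = a5) :
    dH1dq2 eta (a1+a5) a2 (a3+a5) (a4+a5) (-a5) q1 p1 (q2 + r) p2 t s = dH1dq2 eta a1 a2 a3 a4 a5 q1 p1 q2 p2 t s := by
  simp only [dH1dq2]
  exact cancel_div _ _ _ p2 1 hp2 (by linear_combination (2*p1*p2*t^2 + (-2)*p1*p2*t^2*s + 4*q1*p1*p2*t*s + (-4)*q1*p1*p2*t^2 + (-2)*q1^2*p1*p2*s + 2*q1^2*p1*p2*t + 2*a2*p2*t*s + (-2)*a2*p2*t^2 + (-2)*a2*q1*p2*s + 2*a2*q1*p2*t + (-2)*eta*p1*p2*t + 2*eta*p1*p2*t^2) * hr)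


theorem ident5 (eta a1 a2 a3 a4 a5 q1 p1 q2 p2 t s r : ℂ) (hp2 : p2 ≠ 0) (hr : p2 * r = a5) :
    dH1dp2 eta (a1+a5) (-a5) (a3+a5) (a4+a5) a2 (q2 + r) p2 q1 p1 s t = dH1dp2 eta a1 a5 a3 a4 a2 q2 p2 q1 p1 s t := by
  simp only [dH1dp2]
  exact cancel_div _ _ _ p2 2 hp2 (by linear_combination (p2^2*t*s*r + (-1)*p2^2*t*s^2*r + 2*q2*p2^2*t*s + (-2)*q2*p2^2*t*s^2 + (-1)*q1*p2^2*s*r + q1*p2^2*s^2*r + q1*p2^2*t*r + (-2)*q1*p2^2*t*s + (-1)*q1*p2^2*t*s*r + 2*q1*p2^2*t*s^2 + (-2)*q1*q2*p2^2*s + 2*q1*q2*p2^2*s^2 + 2*q1*q2*p2^2*t + (-2)*q1*q2*p2^2*t*s + q1^2*p2^2*s*r + (-2)*q1^2*p2^2*s^2 + (-1)*q1^2*p2^2*t*r + 2*q1^2*p2^2*t*s + 2*q1^2*q2*p2^2*s + (-2)*q1^2*q2*p2^2*t + (-1)*eta*p2^2*t*r + eta*p2^2*t*s*r + (-2)*eta*q2*p2^2*t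 + 2*eta*q2*p2^2*t*s + 2*eta*q1*p2^2*s + (-1)*eta*q1*p2^2*s*r + eta*q1*p2^2*t*r + (-2)*eta*q1*p2^2*t*s + (-2)*eta*q1*q2*p2^2*s + 2*eta*q1*q2*p2^2*t) * hr)


theorem ident6 (eta a1 a2 a3 a4 a5 q1 p1 q2 p2 t s r : ℂ) (hp2 : p2 ≠ 0) (hr : p2 * r = a5) :
    dH1dq2 eta (a1+a5) (-a5) (a3+a5) (a4+a5) a2 (q2 + r) p2 q1 p1 s t = dH1dq2 eta a1 a5 a3 a4 a2 q2 p2 q1 p1 s t := by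
  simp only [dH1dq2]
  exact cancel_div _ _ _ p2 2 hp2 (by linear_combination ((-1)*p1*p2^2*s*r + p1*p2^2*s^2*r + p1*p2^2*t*r + (-2)*p1*p2^2*t*s + (-1)*p1*p2^2*t*s*r + 2*p1*p2^2*t*s^2 + (-2)*p1*q2*p2^2*s + 2*p1*q2*p2^2*s^2 + 2*p1*q2*p2^2*t + (-2)*p1*q2*p2^2*t*s + 2*q1*p1*p2^2*s*r + (-4)*q1*p1*p2^2*s^2 + (-2)*q1*p1*p2^2*t*r + 4*q1*p1*p2^2*t*s + 4*q1*p1*q2*p2^2*s + (-4)*q1*p1*q2*p2^2*t + a2*p2^2*s*r + (-2)*a2*p2^2*s^2 + (-1)*a2*p2^2*t*r + 2*a2*p2^2*t*s + 2*a2*q2*p2^2*s + (-2)*a2*q2*p2^2*t + 2*eta*p1*p2^2*s + (-1)*eta*p1*p2^2*s*r + eta*p1*p2^2*t*r + (-2)*eta*p1*p2^2*t*s + (-2)*eta*p1*q2*p2^2*s + 2*eta*p1*q2*p2^2*t) * hr)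


theorem ident7 (eta a1 a2 a3 a4 a5 q1 p1 q2 p2 t s r : ℂ) (hp2 : p2 ≠ 0) (hr : p2 * r = a5) :
    dH1dp1 eta (a1+a5) (-a5) (a3+a5) (a4+a5) a2 (q2 + r) p2 q1 p1 s t = dH1dp1 eta a1 a5 a3 a4 a2 q2 p2 q1 p1 s t + a5/p2^2 * dH1dq1 eta a1 a5 a3 a4 a2 q2 p2 q1 p1 s t := by
  simp only [dH1dp1, dH1dq1]
  exact cancel_div3 _ _ _ _ p2 a5 4 hp2 (by linear_combination ((-2)*p2^6*s*r^2 + 2*p2^6*s*r^3 + 2*p2^6*s^2*r + (-2)*p2^6*s^2*r^2 + 2*p2^6*t*r^2 + (-2)*p2^6*t*r^3 + (-2)*p2^6*t*s*r + 2*p2^6*t*s*r^2 + (-6)*q2*p2^6*s*r + 8*q2*p2^6*s*r^2 + 4*q2*p2^6*s^2 + (-6)*q2*p2^6*s^2*r + 6*q2*p2^6*t*r + (-8)*q2*p2^6*t*r^2 + (-4)*q2*p2^6*t*s + 6*q2*p2^6*t*s*r + (-6)*q2^2*p2^6*s + 12*q2^2*p2^6*s*r + (-6)*q2^2*p2^6*s^2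 + 6*q2^2*p2^6*t + (-12)*q2^2*p2^6*t*r + 6*q2^2*p2^6*t*s + 8*q2^3*p2^6*s + (-8)*q2^3*p2^6*t + p1*p2^5*t*s*r + (-1)*p1*p2^5*t*s^2*r + 2*p1*q2*p2^5*t*s + (-2)*p1*q2*p2^5*t*s^2 + (-1)*q1*p1*p2^5*s*r + q1*p1*p2^5*s^2*r + q1*p1*p2^5*t*r + (-2)*q1*p1*p2^5*t*s + (-1)*q1*p1*p2^5*t*s*r + 2*q1*p1*p2^5*t*s^2 + (-2)*q1*p1*q2*p2^5*s + 2*q1*p1*q2*p2^5*s^2 + 2*q1*p1*q2*p2^5*t + (-2)*q1*p1*q2*p2^5*t*s + q1^2*p1*p2^5*s*r + (-2)*q1^2*p1*p2^5*s^2 + (-1)*q1^2*p1*p2^5*t*r + 2*q1^2*p1*p2^5*t*s + 2*q1^2*p1*q2*p2^5*s + (-2)*q1^2*p1*q2*p2^5*t + (-1)*a5*p2^5*s*r + a5*p2^5*s^2*r + a5*p2^5*t*r + (-1)*a5*p2^5*t*s*r + (-4)*a5*q2*p2^5*s + 2*a5*q2*p2^5*s*r + 4*a5*q2*p2^5*t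 + (-2)*a5*q2*p2^5*t*r + 6*a5*q2^2*p2^5*s + (-6)*a5*q2^2*p2^5*t + a5*p1*p2^4*t*s + (-1)*a5*p1*p2^4*t*s^2 + (-1)*a5*q1*p1*p2^4*s + a5*q1*p1*p2^4*s^2 + a5*q1*p1*p2^4*t + (-1)*a5*q1*p1*p2^4*t*s + a5*q1^2*p1*p2^4*s + (-1)*a5*q1^2*p1*p2^4*t + (-1)*a5^2*p2^4*s + a5^2*p2^4*s^2 + a5^2*p2^4*t + (-1)*a5^2*p2^4*t*s + 2*a5^2*q2*p2^4*s + (-2)*a5^2*q2*p2^4*t + (-1)*a4*p2^5*s^2 + a4*p2^5*s^2*r + a4*p2^5*t*s + (-1)*a4*p2^5*t*s*r + 2*a4*q2*p2^5*s^2 + (-2)*a4*q2*p2^5*t*s + a4*a5*p2^4*s^2 + (-1)*a4*a5*p2^4*t*s + (-1)*a3*p2^5*s*r + a3*p2^5*s^2*r + a3*p2^5*t*r + (-1)*a3*p2^5*t*s*r + (-2)*a3*q2*p2^5*s + 2*a3*q2*p2^5*s^2 + 2*a3*q2*p2^5*t + (-2)*a3*q2*p2^5*t*s + (-1)*a3*a5*p2^4*s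 + a3*a5*p2^4*s^2 + a3*a5*p2^4*t + (-1)*a3*a5*p2^4*t*s + (-1)*a2*p2^5*s*r + (-1)*a2*p2^5*s^2 + 2*a2*p2^5*s^2*r + a2*p2^5*t*r + (-2)*a2*p2^5*t*s*r + a2*p2^5*t*s^2 + (-2)*a2*q2*p2^5*s + 4*a2*q2*p2^5*s^2 + 2*a2*q2*p2^5*t + (-4)*a2*q2*p2^5*t*s + a2*q1*p2^5*s*r + (-2)*a2*q1*p2^5*s^2 + (-1)*a2*q1*p2^5*t*r + 2*a2*q1*p2^5*t*s + 2*a2*q1*q2*p2^5*s + (-2)*a2*q1*q2*p2^5*t + (-1)*a2*a5*p2^4*s + 2*a2*a5*p2^4*s^2 + a2*a5*p2^4*t + (-2)*a2*a5*p2^4*t*s + a2*a5*q1*p2^4*s + (-1)*a2*a5*q1*p2^4*t + (-1)*a1*p2^5*s^2 + a1*p2^5*s^2*r + a1*p2^5*t*s + (-1)*a1*p2^5*t*s*r + 2*a1*q2*p2^5*s^2 + (-2)*a1*q2*p2^5*t*s + a1*a5*p2^4*s^2 + (-1)*a1*a5*p2^4*t*s + 2*eta*p2^6*s*r + (-2)*eta*p2^6*s*r^2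 + (-2)*eta*p2^6*s^2 + 2*eta*p2^6*s^2*r + (-2)*eta*p2^6*t*r + 2*eta*p2^6*t*r^2 + 2*eta*p2^6*t*s + (-2)*eta*p2^6*t*s*r + 4*eta*q2*p2^6*s + (-6)*eta*q2*p2^6*s*r + 4*eta*q2*p2^6*s^2 + (-4)*eta*q2*p2^6*t + 6*eta*q2*p2^6*t*r + (-4)*eta*q2*p2^6*t*s + (-6)*eta*q2^2*p2^6*s + 6*eta*q2^2*p2^6*t + (-1)*eta*p1*p2^5*t*r + eta*p1*p2^5*t*s*r + (-2)*eta*p1*q2*p2^5*t + 2*eta*p1*q2*p2^5*t*s + 2*eta*q1*p1*p2^5*s + (-1)*eta*q1*p1*p2^5*s*r + eta*q1*p1*p2^5*t*r + (-2)*eta*q1*p1*p2^5*t*s + (-2)*eta*q1*p1*q2*p2^5*s + 2*eta*q1*p1*q2*p2^5*t + 2*eta*a5*p2^5*s + (-1)*eta*a5*p2^5*s*r + (-2)*eta*a5*p2^5*t + eta*a5*p2^5*t*r + (-4)*eta*a5*q2*p2^5*s + 4*eta*a5*q2*p2^5*t + (-1)*eta*a5*p1*p2^4*t + eta*a5*p1*p2^4*t*s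 + (-1)*eta*a5*q1*p1*p2^4*s + eta*a5*q1*p1*p2^4*t + (-1)*eta*a5^2*p2^4*s + eta*a5^2*p2^4*t + (-1)*eta*a4*p2^5*s^2 + eta*a4*p2^5*t*s + eta*a3*p2^5*s + (-1)*eta*a3*p2^5*s^2 + (-1)*eta*a3*p2^5*t + eta*a3*p2^5*t*s + 2*eta*a2*p2^5*s + (-1)*eta*a2*p2^5*s*r + (-1)*eta*a2*p2^5*s^2 + (-1)*eta*a2*p2^5*t + eta*a2*p2^5*t*r + (-2)*eta*a2*q2*p2^5*s + 2*eta*a2*q2*p2^5*t + (-1)*eta*a2*a5*p2^4*s + eta*a2*a5*p2^4*t + eta*a1*p2^5*s + (-1)*eta*a1*p2^5*s*r + (-1)*eta*a1*p2^5*t + eta*a1*p2^5*t*r + (-2)*eta*a1*q2*p2^5*s + 2*eta*a1*q2*p2^5*t + (-1)*eta*a1*a5*p2^4*s + eta*a1*a5*p2^4*t) * hr)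


theorem ident8 (eta a1 a2 a3 a4 a5 q1 p1 q2 p2 t s r : ℂ) (hp2 : p2 ≠ 0) (hr : p2 * r = a5) :
    dH1dq1 eta (a1+a5) (-a5) (a3+a5) (a4+a5) a2 (q2 + r) p2 q1 p1 s t = dH1dq1 eta a1 a5 a3 a4 a2 q2 p2 q1 p1 s t := by
  simp only [dH1dq1]
  exact cancel_div _ _ _ p2 3 hp2 (by linear_combination ((-3)*p2^4*s*r + 4*p2^4*s*r^2 + 2*p2^4*s^2 + (-3)*p2^4*s^2*r + 3*p2^4*t*r + (-4)*p2^4*t*r^2 + (-2)*p2^4*t*s + 3*p2^4*t*s*r + (-6)*q2*p2^4*s + 12*q2*p2^4*s*r + (-6)*q2*p2^4*s^2 + 6*q2*p2^4*t + (-12)*q2*p2^4*t*r + 6*q2*p2^4*t*s + 12*q2^2*p2^4*s + (-12)*q2^2*p2^4*t + 2*p1*p2^3*t*s + (-2)*p1*p2^3*t*s^2 + (-2)*q1*p1*p2^3*s + 2*q1*p1*p2^3*s^2 + 2*q1*p1*p2^3*t + (-2)*q1*p1*p2^3*t*s + 2*q1^2*p1*p2^3*s + (-2)*q1^2*p1*p2^3*t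 + (-1)*a5*p2^3*s + (-2)*a5*p2^3*s*r + 3*a5*p2^3*s^2 + a5*p2^3*t + 2*a5*p2^3*t*r + (-3)*a5*p2^3*t*s + 2*a4*p2^3*s^2 + (-2)*a4*p2^3*t*s + (-2)*a3*p2^3*s + 2*a3*p2^3*s^2 + 2*a3*p2^3*t + (-2)*a3*p2^3*t*s + (-2)*a2*p2^3*s + 4*a2*p2^3*s^2 + 2*a2*p2^3*t + (-4)*a2*p2^3*t*s + 2*a2*q1*p2^3*s + (-2)*a2*q1*p2^3*t + 2*a1*p2^3*s^2 + (-2)*a1*p2^3*t*s + 2*eta*p2^4*s + (-3)*eta*p2^4*s*r + 2*eta*p2^4*s^2 + (-2)*eta*p2^4*t + 3*eta*p2^4*t*r + (-2)*eta*p2^4*t*s + (-6)*eta*q2*p2^4*s + 6*eta*q2*p2^4*t + (-2)*eta*p1*p2^3*t + 2*eta*p1*p2^3*t*s + (-2)*eta*q1*p1*p2^3*s + 2*eta*q1*p1*p2^3*t + (-1)*eta*a5*p2^3*s + eta*a5*p2^3*t + (-2)*eta*a2*p2^3*s + 2*eta*a2*p2^3*t + (-2)*eta*a1*p2^3*s +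 2*eta*a1*p2^3*t) * hr)

/-- Bäcklund transformation `s₂` maps solutions of system (1) to solutions. -/
theorem backlund_s2 (eta a0 a1 a2 a3 a4 a5 : ℂ) (heta0 : eta ≠ 0) (heta1 : eta ≠ 1)
    (hrel : a0 + a1 + 2*a2 + a3 + a4 + 2*a5 = 1)
    (D : Set (ℂ × ℂ)) (q1 p1 q2 p2 : ℂ × ℂ → ℂ)
    (hsol : IsSol eta a0 a1 a2 a3 a4 a5 D q1 p1 q2 p2)
    (hp2 : ∀ x ∈ D, p2 x ≠ 0) :
    IsSol eta (a0+a5) (a1+a5) a2 (a3+a5) (a4+a5) (-a5) D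
      q1 p1 (fun x => q2 x + a5 / p2 x) p2 := by
  obtain ⟨hD, hAdm, hdq1, hdp1, hdq2, hdp2, heqs⟩ := hsol
  have hdiv : DifferentiableOn ℂ (fun x : ℂ × ℂ => a5 / p2 x) D := by
    simp only [div_eq_mul_inv]
    exact (hdp2.inv hp2).const_mul a5
  refine ⟨hD, hAdm, hdq1, hdp1, hdq2.add hdiv, hdp2, ?_⟩
  intro x hx
  obtain ⟨ht0, ht1, hte, hs0, hs1, hse, hts⟩ := hAdm x hx
  have ht1' : x.1 - 1 ≠ 0 := sub_ne_zero.mpr ht1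
  have hte' : x.1 - eta ≠ 0 := sub_ne_zero.mpr hte
  have hts' : x.1 - x.2 ≠ 0 := sub_ne_zero.mpr hts
  have hs1' : x.2 - 1 ≠ 0 := sub_ne_zero.mpr hs1
  have hse' : x.2 - eta ≠ 0 := sub_ne_zero.mpr hse
  have hst' : x.2 - x.1 ≠ 0 := sub_ne_zero.mpr (Ne.symm hts)
  have hp2x : p2 x ≠ 0 := hp2 x hx
  have hr : p2 x * (a5 / p2 x) = a5 := by field_simp
  obtain ⟨e1, e2, e3, e4, e5, e6, e7, e8⟩ := heqs x hx
  have hxD : D ∈ nhds x := hD.mem_nhds hx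
  have hq2at : DifferentiableAt ℂ (fun u => q2 (u, x.2)) x.1 :=
    (hdq2.differentiableAt hxD).comp x.1 (DifferentiableAt.prodMk differentiableAt_id (differentiableAt_const _))
  have hp2at : DifferentiableAt ℂ (fun u => p2 (u, x.2)) x.1 :=
    (hdp2.differentiableAt hxD).comp x.1 (DifferentiableAt.prodMk differentiableAt_id (differentiableAt_const _))
  have hq2at2 : DifferentiableAt ℂ (fun u => q2 (x.1, u)) x.2 :=
    (hdq2.differentiableAt hxD).comp x.2 (DifferentiableAt.prodMk (differentiableAt_const _) differentiableAt_id)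
  have hp2at2 : DifferentiableAt ℂ (fun u => p2 (x.1, u)) x.2 :=
    (hdp2.differentiableAt hxD).comp x.2 (DifferentiableAt.prodMk (differentiableAt_const _) differentiableAt_id)
  rw [slice_p1 eta a1 a2 a3 a4 a5 (q1 x) (p1 x) (q2 x) (p2 x) x.1 x.2 ht0 ht1' hte' hts'] at e1
  rw [slice_q1 eta a1 a2 a3 a4 a5 (q1 x) (p1 x) (q2 x) (p2 x) x.1 x.2 ht0 ht1' hte' hts'] at e2
  rw [slice_p2 eta a1 a2 a3 a4 a5 (q1 x) (p1 x) (q2 x) (p2 x) x.1 x.2 ht0 ht1' hte' hts'] at e3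
  rw [slice_q2 eta a1 a2 a3 a4 a5 (q1 x) (p1 x) (q2 x) (p2 x) x.1 x.2 ht0 ht1' hte' hts'] at e4
  simp only [H2] at e5 e6 e7 e8
  rw [slice_p2 eta a1 a5 a3 a4 a2 (q2 x) (p2 x) (q1 x) (p1 x) x.2 x.1 hs0 hs1' hse' hst'] at e5
  rw [slice_q2 eta a1 a5 a3 a4 a2 (q2 x) (p2 x) (q1 x) (p1 x) x.2 x.1 hs0 hs1' hse' hst'] at e6
  rw [slice_p1 eta a1 a5 a3 a4 a2 (q2 x) (p2 x) (q1 x) (p1 x) x.2 x.1 hs0 hs1' hse' hst'] at e7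
  rw [slice_q1 eta a1 a5 a3 a4 a2 (q2 x) (p2 x) (q1 x) (p1 x) x.2 x.1 hs0 hs1' hse' hst'] at e8
  refine ⟨?_, ?_, ?_, ?_, ?_, ?_, ?_, ?_⟩
  · simp only []
    rw [slice_p1 eta (a1+a5) a2 (a3+a5) (a4+a5) (-a5) (q1 x) (p1 x) (q2 x + a5 / p2 x)
        (p2 x) x.1 x.2 ht0 ht1' hte' hts', e1,
      ident1 eta a1 a2 a3 a4 a5 (q1 x) (p1 x) (q2 x) (p2 x) x.1 x.2 (a5 / p2 x) hp2x hr]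
  · simp only []
    rw [slice_q1 eta (a1+a5) a2 (a3+a5) (a4+a5) (-a5) (q1 x) (p1 x) (q2 x + a5 / p2 x)
        (p2 x) x.1 x.2 ht0 ht1' hte' hts', e2,
      ident2 eta a1 a2 a3 a4 a5 (q1 x) (p1 x) (q2 x) (p2 x) x.1 x.2 (a5 / p2 x) hp2x hr]
  · simp only []
    have hL : deriv (fun u => q2 (u, x.2) + a5 / p2 (u, x.2)) x.1
        = deriv (fun u => q2 (u, x.2)) x.1
          + (0 * p2 x - a5 * deriv (fun u => p2 (u, x.2)) x.1) / p2 x ^ 2 :=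
      (hq2at.hasDerivAt.add ((hasDerivAt_const x.1 a5).div hp2at.hasDerivAt hp2x)).deriv
    rw [slice_p2 eta (a1+a5) a2 (a3+a5) (a4+a5) (-a5) (q1 x) (p1 x) (q2 x + a5 / p2 x)
        (p2 x) x.1 x.2 ht0 ht1' hte' hts', hL, e3, e4,
      ident3 eta a1 a2 a3 a4 a5 (q1 x) (p1 x) (q2 x) (p2 x) x.1 x.2 (a5 / p2 x) hp2x hr]
    ring
  · simp only []
    rw [slice_q2 eta (a1+a5) a2 (a3+a5) (a4+a5) (-a5) (q1 x) (p1 x) (q2 x + a5 / p2 x)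
        (p2 x) x.1 x.2 ht0 ht1' hte' hts', e4,
      ident4 eta a1 a2 a3 a4 a5 (q1 x) (p1 x) (q2 x) (p2 x) x.1 x.2 (a5 / p2 x) hp2x hr]
  · simp only [H2]
    rw [slice_p2 eta (a1+a5) (-a5) (a3+a5) (a4+a5) a2 (q2 x + a5 / p2 x) (p2 x) (q1 x)
        (p1 x) x.2 x.1 hs0 hs1' hse' hst', e5,
      ident5 eta a1 a2 a3 a4 a5 (q1 x) (p1 x) (q2 x) (p2 x) x.1 x.2 (a5 / p2 x) hp2x hr]
  · simp only [H2]
    rw [slice_q2 eta (a1+a5) (-a5) (a3+a5) (a4+a5) a2 (q2 x + a5 / p2 x) (p2 x) (q1 x)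
        (p1 x) x.2 x.1 hs0 hs1' hse' hst', e6,
      ident6 eta a1 a2 a3 a4 a5 (q1 x) (p1 x) (q2 x) (p2 x) x.1 x.2 (a5 / p2 x) hp2x hr]
  · simp only [H2]
    have hL : deriv (fun u => q2 (x.1, u) + a5 / p2 (x.1, u)) x.2
        = deriv (fun u => q2 (x.1, u)) x.2
          + (0 * p2 x - a5 * deriv (fun u => p2 (x.1, u)) x.2) / p2 x ^ 2 :=
      (hq2at2.hasDerivAt.add ((hasDerivAt_const x.2 a5).div hp2at2.hasDerivAt hp2x)).deriv
    rw [slice_p1 eta (a1+a5) (-a5) (a3+a5) (a4+a5) a2 (q2 x + a5 / p2 x) (p2 x) (q1 x)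
        (p1 x) x.2 x.1 hs0 hs1' hse' hst', hL, e7, e8,
      ident7 eta a1 a2 a3 a4 a5 (q1 x) (p1 x) (q2 x) (p2 x) x.1 x.2 (a5 / p2 x) hp2x hr]
    ring
  · simp only [H2]
    rw [slice_q1 eta (a1+a5) (-a5) (a3+a5) (a4+a5) a2 (q2 x + a5 / p2 x) (p2 x) (q1 x)
        (p1 x) x.2 x.1 hs0 hs1' hse' hst', e8,
      ident8 eta a1 a2 a3 a4 a5 (q1 x) (p1 x) (q2 x) (p2 x) x.1 x.2 (a5 / p2 x) hp2x hr]

end
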